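/- The set of phases of the monoid μ_W on ℂ² (given by μ_W|00⟩=|0⟩, μ_W|01⟩=μ_W|10⟩=|1⟩, μ_W|11⟩=0) is exactly the set of invertible lower-triangular matrices of the form a·[[1,0],[b,1]] with a ∈ ℂ*, b ∈ ℂ; hence the phase group is isomorphic to ℂ* × ℂ (multiplicative times additive). -/

import Mathlib

open Matrix Kronecker

/-- `μ_W|00⟩ = |0⟩, μ_W|01⟩ = μ_W|10⟩ = |1⟩, μ_W|11⟩ = 0`. -/
noncomputable def muW : Matrix (Fin 2) (Fin 2 × Fin 2) ℂ :=
  Matrix.of fun i p => if (p.1 : ℕ) + (p.2 : ℕ) = (i : ℕ) then 1 else 0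

/-- `α` is a phase of the monoid `μ_W`: invertible and `μ_W ∘ (α ⊗ id) = α ∘ μ_W`. -/
noncomputable def IsPhaseW (α : Matrix (Fin 2) (Fin 2) ℂ) : Prop :=
  IsUnit α ∧ muW * (α ⊗ₖ (1 : Matrix (Fin 2) (Fin 2) ℂ)) = α * muW

lemma phaseW_key (α : Matrix (Fin 2) (Fin 2) ℂ) :
    IsPhaseW α ↔ α 0 1 = 0 ∧ α 1 1 = α 0 0 ∧ α 0 0 ≠ 0 := by
  constructor
  · rintro ⟨hu, h⟩
    have h1 := congrFun (congrFun h 0) (0,1)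
    have h2 := congrFun (congrFun h 1) (0,1)
    simp [Matrix.mul_apply, muW, Fintype.sum_prod_type, Fin.sum_univ_two,
      Matrix.one_apply] at h1 h2
    refine ⟨h1.symm, h2.symm, ?_⟩
    have hd : IsUnit α.det := (Matrix.isUnit_iff_isUnit_det α).mp hu
    rw [Matrix.det_fin_two, ← h1, ← h2] at hd
    intro h0
    rw [h0] at hd
    simp at hd
  · rintro ⟨h1, h2, h0⟩
    constructor
    · rw [Matrix.isUnit_iff_isUnit_det, Matrix.det_fin_two, h1, h2]
      simpa using mul_ne_zero h0 h0
    · ext i p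
      fin_cases i <;> fin_cases p <;>
        simp [Matrix.mul_apply, muW, Fintype.sum_prod_type, Fin.sum_univ_two,
          Matrix.one_apply, h1, h2]

lemma phaseW_smul (a b : ℂ) (ha : a ≠ 0) : IsPhaseW (a • !![1, 0; b, 1]) := by
  rw [phaseW_key]
  refine ⟨?_, ?_, ?_⟩ <;> simp [ha]

/-- The phases of `μ_W` are exactly the matrices `a·[[1,0],[b,1]]` with `a ∈ ℂ*`, `b ∈ ℂ`;
the phase group is isomorphic to `ℂ* × ℂ` (multiplicative times additive). -/
theorem stmt10 :
    (∀ α : Matrix (Fin 2) (Fin 2) ℂ,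
      IsPhaseW α ↔ ∃ a b : ℂ, a ≠ 0 ∧ α = a • !![1, 0; b, 1]) ∧
    ∃ e : {α : Matrix (Fin 2) (Fin 2) ℂ // IsPhaseW α} ≃ ℂˣ × ℂ,
      ∀ (x y : {α : Matrix (Fin 2) (Fin 2) ℂ // IsPhaseW α})
        (h : IsPhaseW (x.1 * y.1)),
        e ⟨x.1 * y.1, h⟩ = ((e x).1 * (e y).1, (e x).2 + (e y).2) := by
  have hform : ∀ α : Matrix (Fin 2) (Fin 2) ℂ,
      IsPhaseW α ↔ ∃ a b : ℂ, a ≠ 0 ∧ α = a • !![1, 0; b, 1] := by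
    intro α
    rw [phaseW_key]
    constructor
    · rintro ⟨h1, h2, h0⟩
      refine ⟨α 0 0, α 1 0 / α 0 0, h0, ?_⟩
      ext i j
      fin_cases i <;> fin_cases j <;>
        simp [h1, h2] <;> field_simp
    · rintro ⟨a, b, ha, rfl⟩
      refine ⟨?_, ?_, ?_⟩ <;> simp [ha]
  refine ⟨hform, ?_⟩
  refine ⟨{
    toFun := fun x => (Units.mk0 (x.1 0 0) ((phaseW_key x.1).mp x.2).2.2,
      x.1 1 0 / x.1 0 0)
    invFun := fun p => ⟨(p.1 : ℂ) • !![1, 0; p.2, 1], phaseW_smul _ _ p.1.ne_zero⟩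
    left_inv := ?_
    right_inv := ?_ }, ?_⟩
  · rintro ⟨α, hα⟩
    obtain ⟨h1, h2, h0⟩ := (phaseW_key α).mp hα
    ext i j
    fin_cases i <;> fin_cases j <;> simp [h1, h2] <;> field_simp
  · rintro ⟨a, b⟩
    have ha := a.ne_zero
    refine Prod.ext (Units.ext ?_) ?_ <;> simp <;> field_simp
  · rintro ⟨x, hx⟩ ⟨y, hy⟩ h
    obtain ⟨hx1, hx2, hx0⟩ := (phaseW_key x).mp hx
    obtain ⟨hy1, hy2, hy0⟩ := (phaseW_key y).mp hy
    have e00 : (x * y) 0 0 = x 0 0 * y 0 0 := by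
      simp [Matrix.mul_apply, Fin.sum_univ_two, hx1]
    have e10 : (x * y) 1 0 = x 1 0 * y 0 0 + x 0 0 * y 1 0 := by
      simp [Matrix.mul_apply, Fin.sum_univ_two, hx2, mul_comm]
    refine Prod.ext (Units.ext ?_) ?_
    · simpa using e00
    · show (x * y) 1 0 / (x * y) 0 0 = x 1 0 / x 0 0 + y 1 0 / y 0 0
      rw [e00, e10]
      field_simp
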